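/- arXiv:0912.5174 — 5 statements merged into one kernel-verified Lean document; each statement's English description precedes it below -/
import Mathlib

section
/- Let d ≥ 3, let n ≥ 1 be an integer, let l ∈ {1,…,d}, and let W : ℝ^d → [0,∞) be measurable with K := sup_{p ∈ ℝ^d} ∫_{ℝ^d} W(p + q) |q|^{−2} dq < ∞. Let û : (ℝ^d)^n → ℂ be measurable and symmetric, i.e. û(p_{σ(1)},…,p_{σ(n)}) = û(p_1,…,p_n) for every permutation σ of {1,…,n}. Then, with the convention that both sides are values in [0,∞], ∫_{(ℝ^d)^{n+1}} |p_1 + ⋯ + p_{n+1}|^{−2} · | Σ_{m=1}^{n+1} (p_m)_l · û(p_1,…,p_{m−1},p_{m+1},…,p_{n+1}) |² · Π_{m=1}^{n+1} W(p_m)|p_m|^{−2} dp_1⋯dp_{n+1} ≤ K · (n+1)² · ∫_{(ℝ^d)^n} |û(p_1,…,p_n)|² · Π_{m=1}^{n} W(p_m)|p_m|^{−2} dp_1⋯dp_n. -/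
open MeasureTheory Real Filter
open scoped Topology ENNReal

noncomputable section

set_option maxHeartbeats 1000000

private lemma rpow_neg_two_of_nonneg {x : ℝ} (hx : 0 ≤ x) : x ^ (-2 : ℝ) = (x ^ 2)⁻¹ := by
  rw [Real.rpow_neg hx, ← Real.rpow_natCast x 2]; norm_num

private lemma measurable_ofReal_rpow_neg_two {α : Type*} [MeasurableSpace α] {g : α → ℝ}
    (hg : Measurable g) (h0 : ∀ a, 0 ≤ g a) :
    Measurable fun a => ENNReal.ofReal (g a ^ (-2 : ℝ)) := by
  have h : (fun a => ENNReal.ofReal (g a ^ (-2 : ℝ)))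
      = fun a => ENNReal.ofReal ((g a ^ 2)⁻¹) := by
    funext a; rw [rpow_neg_two_of_nonneg (h0 a)]
  rw [h]
  exact ENNReal.measurable_ofReal.comp ((hg.pow_const 2).inv)

private lemma measurable_wfun {d : ℕ} {W : EuclideanSpace ℝ (Fin d) → ℝ}
    (hWmeas : Measurable W) :
    Measurable fun q : EuclideanSpace ℝ (Fin d) =>
      ENNReal.ofReal (W q * ‖q‖ ^ (-2 : ℝ)) := by
  have h : (fun q : EuclideanSpace ℝ (Fin d) => ENNReal.ofReal (W q * ‖q‖ ^ (-2 : ℝ)))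
      = fun q => ENNReal.ofReal (W q * (‖q‖ ^ 2)⁻¹) := by
    funext q; rw [rpow_neg_two_of_nonneg (norm_nonneg q)]
  rw [h]
  exact ENNReal.measurable_ofReal.comp (hWmeas.mul ((measurable_norm.pow_const 2).inv))

private lemma coord_abs_le_norm {d : ℕ} (q : EuclideanSpace ℝ (Fin d)) (l : Fin d) :
    |q l| ≤ ‖q‖ := by
  have := abs_real_inner_le_norm (EuclideanSpace.single l (1 : ℝ)) q
  simpa [EuclideanSpace.inner_single_left, EuclideanSpace.norm_single] using this

private lemma cs_ennreal (N : ℕ) (a : Fin N → ℂ) :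
    ((‖∑ m, a m‖₊ : ℝ≥0∞)) ^ 2 ≤ (N : ℝ≥0∞) * ∑ m, ((‖a m‖₊ : ℝ≥0∞)) ^ 2 := by
  have h1 : ‖∑ m, a m‖ ≤ ∑ m, ‖a m‖ := norm_sum_le _ _
  have h2 : (∑ m, ‖a m‖) ^ 2 ≤ (N : ℝ) * ∑ m, ‖a m‖ ^ 2 := by
    simpa using sq_sum_le_card_mul_sum_sq (s := Finset.univ) (f := fun m => ‖a m‖)
  calc ((‖∑ m, a m‖₊ : ℝ≥0∞)) ^ 2 = ENNReal.ofReal (‖∑ m, a m‖ ^ 2) := by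
        rw [← enorm_eq_nnnorm, ← ofReal_norm, ← ENNReal.ofReal_pow (norm_nonneg _)]
    _ ≤ ENNReal.ofReal ((N : ℝ) * ∑ m, ‖a m‖ ^ 2) :=
        ENNReal.ofReal_le_ofReal ((pow_le_pow_left₀ (norm_nonneg _) h1 2).trans h2)
    _ = (N : ℝ≥0∞) * ∑ m, ((‖a m‖₊ : ℝ≥0∞)) ^ 2 := by
        rw [ENNReal.ofReal_mul (by positivity), ENNReal.ofReal_natCast,
          ENNReal.ofReal_sum_of_nonneg (fun m _ => by positivity)]
        congr 1
        refine Finset.sum_congr rfl fun m _ => ?_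
        rw [← enorm_eq_nnnorm, ← ofReal_norm, ← ENNReal.ofReal_pow (norm_nonneg _)]

/-- The inner one-variable estimate: after freezing the other momenta (whose sum is `x`),
the `q`-integral is bounded by `K`. -/
private lemma inner_bound {d : ℕ} (l : Fin d)
    (W : EuclideanSpace ℝ (Fin d) → ℝ) (hW0 : ∀ p, 0 ≤ W p) (hWmeas : Measurable W)
    (K : ℝ)
    (hK : ∀ p : EuclideanSpace ℝ (Fin d),
      ∫⁻ q : EuclideanSpace ℝ (Fin d), ENNReal.ofReal (W (p + q) * ‖q‖ ^ (-2 : ℝ))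
        ≤ ENNReal.ofReal K)
    (x : EuclideanSpace ℝ (Fin d)) :
    ∫⁻ q : EuclideanSpace ℝ (Fin d),
        ENNReal.ofReal (‖q + x‖ ^ (-2 : ℝ)) * ((‖q l‖₊ : ℝ≥0∞)) ^ 2 *
          ENNReal.ofReal (W q * ‖q‖ ^ (-2 : ℝ))
      ≤ ENNReal.ofReal K := by
  have key : ∀ q : EuclideanSpace ℝ (Fin d), (q l) ^ 2 * ‖q‖ ^ (-2 : ℝ) ≤ 1 := by
    intro q
    by_cases hq : q = 0
    · subst hq; simp
    · have h0 : (0 : ℝ) < ‖q‖ := norm_pos_iff.2 hq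
      rw [rpow_neg_two_of_nonneg (norm_nonneg q), ← div_eq_mul_inv,
        div_le_one (by positivity)]
      calc (q l) ^ 2 = |q l| ^ 2 := (sq_abs _).symm
        _ ≤ ‖q‖ ^ 2 := pow_le_pow_left₀ (abs_nonneg _) (coord_abs_le_norm q l) 2
  have ptwise : ∀ q : EuclideanSpace ℝ (Fin d),
      ENNReal.ofReal (‖q + x‖ ^ (-2 : ℝ)) * ((‖q l‖₊ : ℝ≥0∞)) ^ 2 *
          ENNReal.ofReal (W q * ‖q‖ ^ (-2 : ℝ))
        ≤ ENNReal.ofReal (W q * ‖q + x‖ ^ (-2 : ℝ)) := by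
    intro q
    have hA : (0 : ℝ) ≤ ‖q + x‖ ^ (-2 : ℝ) := Real.rpow_nonneg (norm_nonneg _) _
    have hB : (0 : ℝ) ≤ ‖q‖ ^ (-2 : ℝ) := Real.rpow_nonneg (norm_nonneg _) _
    have hc : ((‖q l‖₊ : ℝ≥0∞)) ^ 2 = ENNReal.ofReal ((q l) ^ 2) := by
      rw [← enorm_eq_nnnorm, ← ofReal_norm, ← ENNReal.ofReal_pow (norm_nonneg _),
        Real.norm_eq_abs, sq_abs]
    rw [hc, ← ENNReal.ofReal_mul hA, ← ENNReal.ofReal_mul (by positivity)]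
    apply ENNReal.ofReal_le_ofReal
    have hW := hW0 q
    calc ‖q + x‖ ^ (-2 : ℝ) * (q l) ^ 2 * (W q * ‖q‖ ^ (-2 : ℝ))
        = (W q * ‖q + x‖ ^ (-2 : ℝ)) * ((q l) ^ 2 * ‖q‖ ^ (-2 : ℝ)) := by ring
      _ ≤ (W q * ‖q + x‖ ^ (-2 : ℝ)) * 1 :=
          mul_le_mul_of_nonneg_left (key q) (by positivity)
      _ = W q * ‖q + x‖ ^ (-2 : ℝ) := mul_one _
  calc ∫⁻ q, ENNReal.ofReal (‖q + x‖ ^ (-2 : ℝ)) * ((‖q l‖₊ : ℝ≥0∞)) ^ 2 *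
          ENNReal.ofReal (W q * ‖q‖ ^ (-2 : ℝ))
      ≤ ∫⁻ q, ENNReal.ofReal (W q * ‖q + x‖ ^ (-2 : ℝ)) := lintegral_mono ptwise
    _ = ∫⁻ y, ENNReal.ofReal (W (-x + y) * ‖y‖ ^ (-2 : ℝ)) := by
        rw [← lintegral_add_right_eq_self
          (fun y => ENNReal.ofReal (W (-x + y) * ‖y‖ ^ (-2 : ℝ))) x]
        refine lintegral_congr fun q => ?_
        have hx : -x + (q + x) = q := by abel
        rw [hx]
    _ ≤ ENNReal.ofReal K := hK (-x)

/-- The single-`m` term bound, via Fubini in the `m`-th coordinate. -/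
private lemma aux_single (d n : ℕ) (l : Fin d)
    (W : EuclideanSpace ℝ (Fin d) → ℝ) (hW0 : ∀ p, 0 ≤ W p) (hWmeas : Measurable W)
    (K : ℝ)
    (hK : ∀ p : EuclideanSpace ℝ (Fin d),
      ∫⁻ q : EuclideanSpace ℝ (Fin d), ENNReal.ofReal (W (p + q) * ‖q‖ ^ (-2 : ℝ))
        ≤ ENNReal.ofReal K)
    (u : (Fin n → EuclideanSpace ℝ (Fin d)) → ℂ) (hu : Measurable u)
    (m : Fin (n + 1)) :
    ∫⁻ p : Fin (n + 1) → EuclideanSpace ℝ (Fin d),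
        ENNReal.ofReal (‖∑ k, p k‖ ^ (-2 : ℝ)) *
        ((‖p m l‖₊ : ℝ≥0∞) * (‖u (fun i => p (m.succAbove i))‖₊ : ℝ≥0∞)) ^ 2 *
        ∏ k, ENNReal.ofReal (W (p k) * ‖p k‖ ^ (-2 : ℝ))
      ≤ ENNReal.ofReal K *
        ∫⁻ p : Fin n → EuclideanSpace ℝ (Fin d),
          (‖u p‖₊ : ℝ≥0∞) ^ 2 * ∏ k, ENNReal.ofReal (W (p k) * ‖p k‖ ^ (-2 : ℝ)) := by
  classical
  -- the function on the product space
  set f : EuclideanSpace ℝ (Fin d) × (Fin n → EuclideanSpace ℝ (Fin d)) → ℝ≥0∞ := fun z =>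
    ENNReal.ofReal (‖z.1 + ∑ j, z.2 j‖ ^ (-2 : ℝ)) *
    ((‖z.1 l‖₊ : ℝ≥0∞) * (‖u z.2‖₊ : ℝ≥0∞)) ^ 2 *
    (ENNReal.ofReal (W z.1 * ‖z.1‖ ^ (-2 : ℝ)) *
      ∏ j, ENNReal.ofReal (W (z.2 j) * ‖z.2 j‖ ^ (-2 : ℝ))) with hf_def
  have hw : Measurable fun q : EuclideanSpace ℝ (Fin d) => ENNReal.ofReal (W q * ‖q‖ ^ (-2 : ℝ)) :=
    measurable_wfun hWmeas
  have hsum2 : Measurable fun z : EuclideanSpace ℝ (Fin d) × (Fin n → EuclideanSpace ℝ (Fin d)) => z.1 + ∑ j, z.2 j :=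
    measurable_fst.add
      (Finset.measurable_sum Finset.univ fun j _ => (measurable_pi_apply j).comp measurable_snd)
  have hf : Measurable f := by
    apply Measurable.mul
    apply Measurable.fun_mul
    · exact measurable_ofReal_rpow_neg_two hsum2.norm fun _ => norm_nonneg _
    · exact (((((EuclideanSpace.proj l).continuous.measurable : Measurable fun q : EuclideanSpace ℝ (Fin d) => q l)).comp measurable_fst).nnnorm.coe_nnreal_ennreal.mul
        (hu.comp measurable_snd).nnnorm.coe_nnreal_ennreal).pow_const 2
    · exact (hw.comp measurable_fst).mul
        (Finset.measurable_prod Finset.univ fun j _ =>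
          hw.comp ((measurable_pi_apply j).comp measurable_snd))
  set e := MeasurableEquiv.piFinSuccAbove (fun _ : Fin (n + 1) => EuclideanSpace ℝ (Fin d)) m with he_def
  have hMP := measurePreserving_piFinSuccAbove (fun _ : Fin (n + 1) => (volume : Measure (EuclideanSpace ℝ (Fin d)))) m
  have hinner : ∀ r : Fin n → EuclideanSpace ℝ (Fin d),
      ∫⁻ q : EuclideanSpace ℝ (Fin d), f (q, r)
        ≤ ((‖u r‖₊ : ℝ≥0∞) ^ 2 * ∏ j, ENNReal.ofReal (W (r j) * ‖r j‖ ^ (-2 : ℝ))) *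
            ENNReal.ofReal K := by
    intro r
    have hstep : ∀ q : EuclideanSpace ℝ (Fin d), f (q, r)
        = ((‖u r‖₊ : ℝ≥0∞) ^ 2 * ∏ j, ENNReal.ofReal (W (r j) * ‖r j‖ ^ (-2 : ℝ))) *
          (ENNReal.ofReal (‖q + ∑ j, r j‖ ^ (-2 : ℝ)) * ((‖q l‖₊ : ℝ≥0∞)) ^ 2 *
            ENNReal.ofReal (W q * ‖q‖ ^ (-2 : ℝ))) := by
      intro q; simp only [hf_def]; ring
    have hmi : Measurable fun q : EuclideanSpace ℝ (Fin d) =>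
        ENNReal.ofReal (‖q + ∑ j, r j‖ ^ (-2 : ℝ)) * ((‖q l‖₊ : ℝ≥0∞)) ^ 2 *
          ENNReal.ofReal (W q * ‖q‖ ^ (-2 : ℝ)) := by
      apply Measurable.fun_mul
      apply Measurable.fun_mul
      · exact measurable_ofReal_rpow_neg_two (measurable_id.add_const _).norm
          fun _ => norm_nonneg _
      · exact ((((EuclideanSpace.proj l).continuous.measurable : Measurable fun q : EuclideanSpace ℝ (Fin d) => q l)).nnnorm.coe_nnreal_ennreal).pow_const 2
      · exact hw
    calc ∫⁻ q : EuclideanSpace ℝ (Fin d), f (q, r)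
        = ((‖u r‖₊ : ℝ≥0∞) ^ 2 * ∏ j, ENNReal.ofReal (W (r j) * ‖r j‖ ^ (-2 : ℝ))) *
          ∫⁻ q : EuclideanSpace ℝ (Fin d), ENNReal.ofReal (‖q + ∑ j, r j‖ ^ (-2 : ℝ)) * ((‖q l‖₊ : ℝ≥0∞)) ^ 2 *
            ENNReal.ofReal (W q * ‖q‖ ^ (-2 : ℝ)) := by
          simp_rw [hstep]; exact lintegral_const_mul _ hmi
      _ ≤ _ := mul_le_mul_right (inner_bound l W hW0 hWmeas K hK (∑ j, r j)) _
  calc ∫⁻ p : Fin (n + 1) → EuclideanSpace ℝ (Fin d),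
        ENNReal.ofReal (‖∑ k, p k‖ ^ (-2 : ℝ)) *
        ((‖p m l‖₊ : ℝ≥0∞) * (‖u (fun i => p (m.succAbove i))‖₊ : ℝ≥0∞)) ^ 2 *
        ∏ k, ENNReal.ofReal (W (p k) * ‖p k‖ ^ (-2 : ℝ))
      = ∫⁻ p : Fin (n + 1) → EuclideanSpace ℝ (Fin d), f (e p) := by
        refine lintegral_congr fun p => ?_
        have hep : e p = (p m, fun j => p (m.succAbove j)) := rfl
        rw [hep, hf_def]
        simp only []
        rw [Fin.sum_univ_succAbove (fun k => p k) m,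
          Fin.prod_univ_succAbove (fun k => ENNReal.ofReal (W (p k) * ‖p k‖ ^ (-2 : ℝ))) m]
    _ = ∫⁻ z : EuclideanSpace ℝ (Fin d) × (Fin n → EuclideanSpace ℝ (Fin d)), f z
          ∂((volume : Measure (EuclideanSpace ℝ (Fin d))).prod (Measure.pi fun _ => (volume : Measure (EuclideanSpace ℝ (Fin d))))) := by
        rw [volume_pi]
        exact hMP.lintegral_comp hf
    _ = ∫⁻ r : Fin n → EuclideanSpace ℝ (Fin d), (∫⁻ q : EuclideanSpace ℝ (Fin d), f (q, r)) ∂(Measure.pi fun _ => (volume : Measure (EuclideanSpace ℝ (Fin d)))) :=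
        lintegral_prod_symm f hf.aemeasurable
    _ ≤ ∫⁻ r : Fin n → EuclideanSpace ℝ (Fin d),
          ((‖u r‖₊ : ℝ≥0∞) ^ 2 * ∏ j, ENNReal.ofReal (W (r j) * ‖r j‖ ^ (-2 : ℝ))) *
            ENNReal.ofReal K ∂(Measure.pi fun _ => (volume : Measure (EuclideanSpace ℝ (Fin d)))) :=
        lintegral_mono hinner
    _ = ENNReal.ofReal K *
          ∫⁻ p : Fin n → EuclideanSpace ℝ (Fin d),
            (‖u p‖₊ : ℝ≥0∞) ^ 2 * ∏ k, ENNReal.ofReal (W (p k) * ‖p k‖ ^ (-2 : ℝ)) := by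
        rw [lintegral_mul_const' _ _ ENNReal.ofReal_ne_top, mul_comm, volume_pi]

/-- the core weighted `L²` estimate of the graded sector condition:
with `K = sup_p ∫ W(p+q)|q|^{-2} dq < ∞` and a symmetric `û` on `(ℝ^d)^n`,
`∫ |Σp_m|^{-2} |Σ_m (p_m)_l û(p \ m)|² Π W(p_m)|p_m|^{-2} dp
  ≤ K (n+1)² ∫ |û|² Π W(p_m)|p_m|^{-2} dp`, both sides in `[0,∞]`. -/
theorem graded_sector_core_estimate (d n : ℕ) (hd : 3 ≤ d) (hn : 1 ≤ n) (l : Fin d)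
    (W : EuclideanSpace ℝ (Fin d) → ℝ) (hW0 : ∀ p, 0 ≤ W p) (hWmeas : Measurable W)
    (K : ℝ)
    (hK : ∀ p : EuclideanSpace ℝ (Fin d),
      ∫⁻ q : EuclideanSpace ℝ (Fin d), ENNReal.ofReal (W (p + q) * ‖q‖ ^ (-2 : ℝ))
        ≤ ENNReal.ofReal K)
    (u : (Fin n → EuclideanSpace ℝ (Fin d)) → ℂ) (hu : Measurable u)
    (hsymm : ∀ (σ : Equiv.Perm (Fin n)) (p : Fin n → EuclideanSpace ℝ (Fin d)),
      u (p ∘ σ) = u p) :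
    ∫⁻ p : Fin (n + 1) → EuclideanSpace ℝ (Fin d),
        ENNReal.ofReal (‖∑ m, p m‖ ^ (-2 : ℝ)) *
        (‖∑ m : Fin (n + 1), (p m l) • u (fun i => p (m.succAbove i))‖₊ : ℝ≥0∞) ^ 2 *
        ∏ m : Fin (n + 1), ENNReal.ofReal (W (p m) * ‖p m‖ ^ (-2 : ℝ))
      ≤ ENNReal.ofReal K * ((n : ℝ≥0∞) + 1) ^ 2 *
        ∫⁻ p : Fin n → EuclideanSpace ℝ (Fin d),
          (‖u p‖₊ : ℝ≥0∞) ^ 2 * ∏ m : Fin n, ENNReal.ofReal (W (p m) * ‖p m‖ ^ (-2 : ℝ)) := by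
  classical
  set I := ∫⁻ p : Fin n → EuclideanSpace ℝ (Fin d),
      (‖u p‖₊ : ℝ≥0∞) ^ 2 * ∏ k, ENNReal.ofReal (W (p k) * ‖p k‖ ^ (-2 : ℝ)) with hI
  set G : Fin (n + 1) → (Fin (n + 1) → EuclideanSpace ℝ (Fin d)) → ℝ≥0∞ := fun m p =>
    ENNReal.ofReal (‖∑ k, p k‖ ^ (-2 : ℝ)) *
    ((‖p m l‖₊ : ℝ≥0∞) * (‖u (fun i => p (m.succAbove i))‖₊ : ℝ≥0∞)) ^ 2 *
    ∏ k, ENNReal.ofReal (W (p k) * ‖p k‖ ^ (-2 : ℝ)) with hG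
  have hw : Measurable fun q : EuclideanSpace ℝ (Fin d) => ENNReal.ofReal (W q * ‖q‖ ^ (-2 : ℝ)) :=
    measurable_wfun hWmeas
  have hS : Measurable fun p : Fin (n + 1) → EuclideanSpace ℝ (Fin d) => ENNReal.ofReal (‖∑ k, p k‖ ^ (-2 : ℝ)) :=
    measurable_ofReal_rpow_neg_two
      (Finset.measurable_sum Finset.univ fun k _ => measurable_pi_apply k).norm
      fun _ => norm_nonneg _
  have hGmeas : ∀ m, Measurable (G m) := by
    intro m
    apply Measurable.mul
    apply Measurable.fun_mul
    · exact hS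
    · exact ((Measurable.comp ((EuclideanSpace.proj l).continuous.measurable : Measurable fun q : EuclideanSpace ℝ (Fin d) => q l) (measurable_pi_apply m : Measurable fun p : Fin (n+1) → EuclideanSpace ℝ (Fin d) => p m)).nnnorm.coe_nnreal_ennreal.mul
        (hu.comp (measurable_pi_lambda (fun (p : Fin (n+1) → EuclideanSpace ℝ (Fin d)) i => p (m.succAbove i)) fun i => measurable_pi_apply _)).nnnorm.coe_nnreal_ennreal).pow_const 2
    · exact Finset.measurable_prod Finset.univ fun k _ => hw.comp (measurable_pi_apply k)
  have hpt : ∀ p : Fin (n + 1) → EuclideanSpace ℝ (Fin d),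
      ENNReal.ofReal (‖∑ m, p m‖ ^ (-2 : ℝ)) *
        (‖∑ m : Fin (n + 1), (p m l) • u (fun i => p (m.succAbove i))‖₊ : ℝ≥0∞) ^ 2 *
        ∏ m : Fin (n + 1), ENNReal.ofReal (W (p m) * ‖p m‖ ^ (-2 : ℝ))
      ≤ ((n + 1 : ℕ) : ℝ≥0∞) * ∑ m : Fin (n + 1), G m p := by
    intro p
    have hcs := cs_ennreal (n + 1) (fun m => (p m l) • u (fun i => p (m.succAbove i)))
    have hnn : ∀ m : Fin (n + 1),
        ((‖(p m l) • u (fun i => p (m.succAbove i))‖₊ : ℝ≥0∞)) ^ 2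
          = ((‖p m l‖₊ : ℝ≥0∞) * (‖u (fun i => p (m.succAbove i))‖₊ : ℝ≥0∞)) ^ 2 := by
      intro m; rw [nnnorm_smul]; push_cast; ring
    have hsum : ∑ m : Fin (n + 1), G m p
        = ENNReal.ofReal (‖∑ k, p k‖ ^ (-2 : ℝ)) *
          (∑ m : Fin (n + 1),
            ((‖p m l‖₊ : ℝ≥0∞) * (‖u (fun i => p (m.succAbove i))‖₊ : ℝ≥0∞)) ^ 2) *
          ∏ k, ENNReal.ofReal (W (p k) * ‖p k‖ ^ (-2 : ℝ)) := by
      simp only [hG]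
      rw [← Finset.sum_mul, ← Finset.mul_sum]
    calc ENNReal.ofReal (‖∑ m, p m‖ ^ (-2 : ℝ)) *
          (‖∑ m : Fin (n + 1), (p m l) • u (fun i => p (m.succAbove i))‖₊ : ℝ≥0∞) ^ 2 *
          ∏ m : Fin (n + 1), ENNReal.ofReal (W (p m) * ‖p m‖ ^ (-2 : ℝ))
        ≤ ENNReal.ofReal (‖∑ m, p m‖ ^ (-2 : ℝ)) *
          (((n + 1 : ℕ) : ℝ≥0∞) * ∑ m : Fin (n + 1),
            ((‖p m l‖₊ : ℝ≥0∞) * (‖u (fun i => p (m.succAbove i))‖₊ : ℝ≥0∞)) ^ 2) *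
          ∏ m : Fin (n + 1), ENNReal.ofReal (W (p m) * ‖p m‖ ^ (-2 : ℝ)) := by
          refine mul_le_mul_left (mul_le_mul_right ?_ _) _
          calc (‖∑ m : Fin (n + 1), (p m l) • u (fun i => p (m.succAbove i))‖₊ : ℝ≥0∞) ^ 2
              ≤ ((n + 1 : ℕ) : ℝ≥0∞) * ∑ m : Fin (n + 1),
                  ((‖(p m l) • u (fun i => p (m.succAbove i))‖₊ : ℝ≥0∞)) ^ 2 := hcs
            _ = _ := by simp_rw [hnn]
      _ = ((n + 1 : ℕ) : ℝ≥0∞) * ∑ m : Fin (n + 1), G m p := by rw [hsum]; ring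
  calc ∫⁻ p : Fin (n + 1) → EuclideanSpace ℝ (Fin d),
        ENNReal.ofReal (‖∑ m, p m‖ ^ (-2 : ℝ)) *
        (‖∑ m : Fin (n + 1), (p m l) • u (fun i => p (m.succAbove i))‖₊ : ℝ≥0∞) ^ 2 *
        ∏ m : Fin (n + 1), ENNReal.ofReal (W (p m) * ‖p m‖ ^ (-2 : ℝ))
      ≤ ∫⁻ p : Fin (n + 1) → EuclideanSpace ℝ (Fin d), ((n + 1 : ℕ) : ℝ≥0∞) * ∑ m : Fin (n + 1), G m p :=
        lintegral_mono hpt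
    _ = ((n + 1 : ℕ) : ℝ≥0∞) * ∑ m : Fin (n + 1), ∫⁻ p : Fin (n + 1) → EuclideanSpace ℝ (Fin d), G m p := by
        rw [lintegral_const_mul _ (Finset.measurable_sum Finset.univ fun m _ => hGmeas m),
          lintegral_finset_sum _ fun m _ => hGmeas m]
    _ ≤ ((n + 1 : ℕ) : ℝ≥0∞) * ∑ m : Fin (n + 1), ENNReal.ofReal K * I := by
        refine mul_le_mul_right (Finset.sum_le_sum fun m _ => ?_) _
        exact aux_single d n l W hW0 hWmeas K hK u hu m
    _ = ENNReal.ofReal K * ((n : ℝ≥0∞) + 1) ^ 2 * I := by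
        rw [Finset.sum_const, Finset.card_univ, Fintype.card_fin, nsmul_eq_mul]
        push_cast
        ring

end
end

section
/- Let d ≥ 1, let C : ℝ^d → ℝ be a bounded continuous function, and let u : ℝ^d → ℝ be a Schwartz function. Then ∫_{ℝ^d} ∫_{ℝ^d} (Δu)(x) · C(x − y) · u(y) dx dy = − Σ_{l=1}^{d} ∫_{ℝ^d} ∫_{ℝ^d} (∂_l u)(x) · C(x − y) · (∂_l u)(y) dx dy, all integrals being absolutely convergent. -/
open MeasureTheory Real Filter
open scoped Topology

noncomputable section

/-- The shear homeomorphism `(x, y) ↦ (x + y, y)`. -/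
def shearHomeo (d : ℕ) :
    (EuclideanSpace ℝ (Fin d) × EuclideanSpace ℝ (Fin d)) ≃ₜ
      (EuclideanSpace ℝ (Fin d) × EuclideanSpace ℝ (Fin d)) where
  toFun p := (p.1 + p.2, p.2)
  invFun p := (p.1 - p.2, p.2)
  left_inv p := by simp
  right_inv p := by simp
  continuous_toFun := by continuity
  continuous_invFun := by fun_prop

/-- for a bounded continuous function `C` and a Schwartz function `u`,
`∫∫ Δu(x) C(x-y) u(y) dx dy = - Σ_l ∫∫ ∂_l u(x) C(x-y) ∂_l u(y) dx dy`,
all the double integrals being absolutely convergent. -/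
theorem laplacian_covariance_integration_by_parts (d : ℕ) (hd : 1 ≤ d)
    (C : EuclideanSpace ℝ (Fin d) → ℝ)
    (hCcont : Continuous C) (hCbdd : ∃ M : ℝ, ∀ x, |C x| ≤ M)
    (u : SchwartzMap (EuclideanSpace ℝ (Fin d)) ℝ) :
    Integrable (fun z : EuclideanSpace ℝ (Fin d) × EuclideanSpace ℝ (Fin d) =>
      (∑ l : Fin d, fderiv ℝ (fun w => fderiv ℝ (fun v => u v) w (EuclideanSpace.single l 1))
          z.1 (EuclideanSpace.single l 1)) * C (z.1 - z.2) * u z.2) ∧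
    (∀ l : Fin d,
      Integrable (fun z : EuclideanSpace ℝ (Fin d) × EuclideanSpace ℝ (Fin d) =>
        fderiv ℝ (fun v => u v) z.1 (EuclideanSpace.single l 1) * C (z.1 - z.2) *
          fderiv ℝ (fun v => u v) z.2 (EuclideanSpace.single l 1))) ∧
    (∫ x : EuclideanSpace ℝ (Fin d), ∫ y : EuclideanSpace ℝ (Fin d),
        (∑ l : Fin d, fderiv ℝ (fun w => fderiv ℝ (fun v => u v) w (EuclideanSpace.single l 1))
            x (EuclideanSpace.single l 1)) * C (x - y) * u y
      = -∑ l : Fin d, ∫ x : EuclideanSpace ℝ (Fin d), ∫ y : EuclideanSpace ℝ (Fin d),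
          fderiv ℝ (fun v => u v) x (EuclideanSpace.single l 1) * C (x - y) *
            fderiv ℝ (fun v => u v) y (EuclideanSpace.single l 1)) := by
  obtain ⟨M, hM⟩ := hCbdd
  set u1 : Fin d → SchwartzMap (EuclideanSpace ℝ (Fin d)) ℝ :=
    fun l => LineDeriv.lineDerivOpCLM ℝ (SchwartzMap (EuclideanSpace ℝ (Fin d)) ℝ) (EuclideanSpace.single l (1:ℝ)) u with hu1def
  set u2 : Fin d → SchwartzMap (EuclideanSpace ℝ (Fin d)) ℝ :=
    fun l => LineDeriv.lineDerivOpCLM ℝ (SchwartzMap (EuclideanSpace ℝ (Fin d)) ℝ) (EuclideanSpace.single l (1:ℝ)) (u1 l) with hu2def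
  have hrw1 : ∀ (l : Fin d) (x : EuclideanSpace ℝ (Fin d)),
      fderiv ℝ (fun v => u v) x (EuclideanSpace.single l 1) = u1 l x :=
    fun l x => (SchwartzMap.lineDerivOp_apply_eq_fderiv _ u x).symm
  have hcoe1 : ∀ l : Fin d,
      (fun w => fderiv ℝ (fun v => u v) w (EuclideanSpace.single l 1)) = ⇑(u1 l) :=
    fun l => funext fun w => hrw1 l w
  have hrw2 : ∀ (l : Fin d) (x : EuclideanSpace ℝ (Fin d)),
      fderiv ℝ (fun w => fderiv ℝ (fun v => u v) w (EuclideanSpace.single l 1)) x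
        (EuclideanSpace.single l 1) = u2 l x := by
    intro l x
    rw [hcoe1 l]
    exact (SchwartzMap.lineDerivOp_apply_eq_fderiv _ (u1 l) x).symm
  have hrw2' : ∀ (l : Fin d) (x : EuclideanSpace ℝ (Fin d)),
      fderiv ℝ (fun w => u1 l w) x (EuclideanSpace.single l 1) = u2 l x :=
    fun l x => (SchwartzMap.lineDerivOp_apply_eq_fderiv _ (u1 l) x).symm
  simp only [hrw1, hrw2, hrw2']
  -- key integrability on the product
  have vol_prod : (volume : Measure ((EuclideanSpace ℝ (Fin d)) × (EuclideanSpace ℝ (Fin d)))) = (volume : Measure (EuclideanSpace ℝ (Fin d))).prod volume :=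
    Measure.volume_eq_prod _ _
  have key : ∀ (f g : SchwartzMap (EuclideanSpace ℝ (Fin d)) ℝ),
      Integrable (fun z : (EuclideanSpace ℝ (Fin d)) × (EuclideanSpace ℝ (Fin d)) => f z.1 * C (z.1 - z.2) * g z.2) := by
    intro f g
    have h1 : Integrable (fun z : (EuclideanSpace ℝ (Fin d)) × (EuclideanSpace ℝ (Fin d)) => f z.1 * g z.2) := by
      rw [vol_prod]
      exact f.integrable.mul_prod g.integrable
    have h2 := h1.bdd_mul
      ((hCcont.comp (continuous_fst.sub continuous_snd)).aestronglyMeasurable)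
      (c := M) (Eventually.of_forall fun z => by simpa using hM (z.1 - z.2))
    refine h2.congr (Eventually.of_forall fun z => ?_)
    simp only [Function.comp, Pi.sub_apply]
    ring
  have prodInt : ∀ (F : (EuclideanSpace ℝ (Fin d)) × (EuclideanSpace ℝ (Fin d)) → ℝ), Integrable F volume →
      (∫ x : EuclideanSpace ℝ (Fin d), ∫ y : EuclideanSpace ℝ (Fin d), F (x, y)) = ∫ p : (EuclideanSpace ℝ (Fin d)) × (EuclideanSpace ℝ (Fin d)), F p := by
    intro F hF
    rw [vol_prod] at hF
    rw [show (∫ p : (EuclideanSpace ℝ (Fin d)) × (EuclideanSpace ℝ (Fin d)), F p) = ∫ p : (EuclideanSpace ℝ (Fin d)) × (EuclideanSpace ℝ (Fin d)), F p ∂((volume : Measure (EuclideanSpace ℝ (Fin d))).prod volume) by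
      rw [← vol_prod]]
    exact (integral_prod F hF).symm
  -- measure preserving shear
  have mp : MeasurePreserving (fun z : (EuclideanSpace ℝ (Fin d)) × (EuclideanSpace ℝ (Fin d)) => (z.1 + z.2, z.2))
      (volume : Measure ((EuclideanSpace ℝ (Fin d)) × (EuclideanSpace ℝ (Fin d)))) volume := by
    rw [vol_prod]
    exact measurePreserving_add_prod _ _
  have hemb : MeasurableEmbedding (fun z : (EuclideanSpace ℝ (Fin d)) × (EuclideanSpace ℝ (Fin d)) => (z.1 + z.2, z.2)) :=
    (shearHomeo d).measurableEmbedding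
  have hcompint : ∀ {F : (EuclideanSpace ℝ (Fin d)) × (EuclideanSpace ℝ (Fin d)) → ℝ}, Integrable F volume →
      Integrable (fun p : (EuclideanSpace ℝ (Fin d)) × (EuclideanSpace ℝ (Fin d)) => F (p.1 + p.2, p.2)) volume := by
    intro F hF
    exact (mp.integrable_comp_emb hemb).mpr hF
  have hcompeq : ∀ F : (EuclideanSpace ℝ (Fin d)) × (EuclideanSpace ℝ (Fin d)) → ℝ,
      (∫ p : (EuclideanSpace ℝ (Fin d)) × (EuclideanSpace ℝ (Fin d)), F (p.1 + p.2, p.2)) = ∫ p : (EuclideanSpace ℝ (Fin d)) × (EuclideanSpace ℝ (Fin d)), F p := by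
    intro F
    exact mp.integral_comp hemb F
  -- the master change-of-variables identity
  have hcomp_form : ∀ (f g : SchwartzMap (EuclideanSpace ℝ (Fin d)) ℝ),
      (fun p : (EuclideanSpace ℝ (Fin d)) × (EuclideanSpace ℝ (Fin d)) => f (p.1 + p.2) * C ((p.1 + p.2) - p.2) * g p.2)
        = fun p : (EuclideanSpace ℝ (Fin d)) × (EuclideanSpace ℝ (Fin d)) => f (p.1 + p.2) * C p.1 * g p.2 := by
    intro f g
    funext p
    rw [add_sub_cancel_right]
  have master : ∀ (f g : SchwartzMap (EuclideanSpace ℝ (Fin d)) ℝ),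
      (∫ x : EuclideanSpace ℝ (Fin d), ∫ y : EuclideanSpace ℝ (Fin d), f x * C (x - y) * g y)
        = ∫ z : EuclideanSpace ℝ (Fin d), ∫ y : EuclideanSpace ℝ (Fin d), f (z + y) * C z * g y := by
    intro f g
    rw [prodInt _ (key f g), ← hcompeq (fun z : (EuclideanSpace ℝ (Fin d)) × (EuclideanSpace ℝ (Fin d)) => f z.1 * C (z.1 - z.2) * g z.2)]
    have hint := hcompint (key f g)
    rw [hcomp_form f g] at hint ⊢
    exact (prodInt _ hint).symm
  have margInt : ∀ (f g : SchwartzMap (EuclideanSpace ℝ (Fin d)) ℝ),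
      Integrable (fun z : EuclideanSpace ℝ (Fin d) => ∫ y : EuclideanSpace ℝ (Fin d), f (z + y) * C z * g y) := by
    intro f g
    have hint := hcompint (key f g)
    rw [hcomp_form f g, vol_prod] at hint
    exact hint.integral_prod_left
  -- shifted integrability
  have hshiftint : ∀ (f g : SchwartzMap (EuclideanSpace ℝ (Fin d)) ℝ) (z : EuclideanSpace ℝ (Fin d)),
      Integrable (fun y : EuclideanSpace ℝ (Fin d) => f (z + y) * g y) := by
    intro f g z
    exact g.integrable.bdd_mul
      ((f.continuous.comp (continuous_const.add continuous_id)).aestronglyMeasurable)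
      (c := (SchwartzMap.seminorm ℝ 0 0) f) (Eventually.of_forall fun y => SchwartzMap.norm_le_seminorm ℝ f (z + y))
  -- derivative of shift
  have hderiv_shift : ∀ (φ : SchwartzMap (EuclideanSpace ℝ (Fin d)) ℝ) (z y : EuclideanSpace ℝ (Fin d)),
      fderiv ℝ (fun w => φ (z + w)) y = fderiv ℝ φ (z + y) := by
    intro φ z y
    have h1 : HasFDerivAt (⇑φ) (fderiv ℝ (⇑φ) (z + y)) (z + y) :=
      φ.differentiableAt.hasFDerivAt
    have h2 : HasFDerivAt (fun w : EuclideanSpace ℝ (Fin d) => z + w) (ContinuousLinearMap.id ℝ (EuclideanSpace ℝ (Fin d))) y :=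
      (hasFDerivAt_id y).const_add z
    have h3 := h1.comp y h2
    simpa [Function.comp_def] using h3.fderiv
  -- integration by parts
  have ibp : ∀ (l : Fin d) (z : EuclideanSpace ℝ (Fin d)),
      (∫ y : EuclideanSpace ℝ (Fin d), u2 l (z + y) * u y) = - ∫ y : EuclideanSpace ℝ (Fin d), u1 l (z + y) * u1 l y := by
    intro l z
    have hf : Differentiable ℝ (fun y : EuclideanSpace ℝ (Fin d) => u1 l (z + y)) :=
      (u1 l).differentiable.comp (differentiable_const z |>.add differentiable_id)
    have h1 : Integrable (fun y : EuclideanSpace ℝ (Fin d) =>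
        fderiv ℝ (fun w => u1 l (z + w)) y (EuclideanSpace.single l 1) * u y) := by
      refine (hshiftint (u2 l) u z).congr (Eventually.of_forall fun y => ?_)
      show u2 l (z + y) * u y
        = fderiv ℝ (fun w => u1 l (z + w)) y (EuclideanSpace.single l 1) * u y
      rw [hderiv_shift, ← SchwartzMap.lineDerivOp_apply_eq_fderiv, ← LineDeriv.lineDerivOpCLM_apply (R := ℝ)]
    have h2 : Integrable (fun y : EuclideanSpace ℝ (Fin d) =>
        u1 l (z + y) * fderiv ℝ (⇑u) y (EuclideanSpace.single l 1)) :=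
      (hshiftint (u1 l) (u1 l) z).congr (Eventually.of_forall fun y => by simp only [hrw1])
    have h3 : Integrable (fun y : EuclideanSpace ℝ (Fin d) => u1 l (z + y) * u y) :=
      hshiftint (u1 l) u z
    have hmain := integral_mul_fderiv_eq_neg_fderiv_mul_of_integrable h1 h2 h3 (fun x _ => hf x)
      (fun x _ => u.differentiableAt) (v := EuclideanSpace.single l 1)
    have e1 : (∫ y : EuclideanSpace ℝ (Fin d),
        u1 l (z + y) * fderiv ℝ (⇑u) y (EuclideanSpace.single l 1))
        = ∫ y : EuclideanSpace ℝ (Fin d), u1 l (z + y) * u1 l y := rfl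
    have e2 : (∫ y : EuclideanSpace ℝ (Fin d),
        fderiv ℝ (fun w => u1 l (z + w)) y (EuclideanSpace.single l 1) * u y)
        = ∫ y : EuclideanSpace ℝ (Fin d), u2 l (z + y) * u y := by
      congr 1
      funext y
      rw [hderiv_shift, ← SchwartzMap.lineDerivOp_apply_eq_fderiv, ← LineDeriv.lineDerivOpCLM_apply (R := ℝ)]
    rw [e1, e2] at hmain
    linarith
  refine ⟨?_, fun l => key (u1 l) (u1 l), ?_⟩
  · have : (fun z : (EuclideanSpace ℝ (Fin d)) × (EuclideanSpace ℝ (Fin d)) => (∑ l : Fin d, u2 l z.1) * C (z.1 - z.2) * u z.2)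
        = fun z : (EuclideanSpace ℝ (Fin d)) × (EuclideanSpace ℝ (Fin d)) => ∑ l : Fin d, u2 l z.1 * C (z.1 - z.2) * u z.2 := by
      funext z
      rw [Finset.sum_mul, Finset.sum_mul]
    rw [this]
    exact integrable_finset_sum _ fun l _ => key (u2 l) u
  · -- main equality
    have hS : ∀ x : EuclideanSpace ℝ (Fin d),
        (∑ l : Fin d, u2 l) x = ∑ l : Fin d, u2 l x := by
      intro x
      rw [← SchwartzMap.coe_coeHom, map_sum]
      simp [SchwartzMap.coe_coeHom]
    have intCz : ∀ (f g : SchwartzMap (EuclideanSpace ℝ (Fin d)) ℝ)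
        (z : EuclideanSpace ℝ (Fin d)),
        Integrable (fun y => f (z + y) * C z * g y) := by
      intro f g z
      exact ((hshiftint f g z).const_mul (C z)).congr
        (Eventually.of_forall fun y => by ring)
    have pull : ∀ (f g : SchwartzMap (EuclideanSpace ℝ (Fin d)) ℝ)
        (z : EuclideanSpace ℝ (Fin d)),
        (∫ y : EuclideanSpace ℝ (Fin d), f (z + y) * C z * g y)
          = C z * ∫ y : EuclideanSpace ℝ (Fin d), f (z + y) * g y := by
      intro f g z
      rw [show (fun y : EuclideanSpace ℝ (Fin d) => f (z + y) * C z * g y)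
          = fun y => C z * (f (z + y) * g y) from funext fun y => by ring]
      exact integral_const_mul _ _
    simp only [← hS]
    rw [master (∑ l : Fin d, u2 l) u]
    have inner : ∀ z : EuclideanSpace ℝ (Fin d),
        (∫ y : EuclideanSpace ℝ (Fin d), (∑ l : Fin d, u2 l) (z + y) * C z * u y)
          = - ∑ l : Fin d, ∫ y : EuclideanSpace ℝ (Fin d),
              u1 l (z + y) * C z * u1 l y := by
      intro z
      rw [show (fun y : EuclideanSpace ℝ (Fin d) => (∑ l : Fin d, u2 l) (z + y) * C z * u y)
          = fun y => ∑ l : Fin d, u2 l (z + y) * C z * u y from funext fun y => by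
            rw [hS, Finset.sum_mul, Finset.sum_mul]]
      rw [integral_finset_sum _ (fun l _ => intCz (u2 l) u z), ← Finset.sum_neg_distrib]
      refine Finset.sum_congr rfl fun l _ => ?_
      rw [pull (u2 l) u z, pull (u1 l) (u1 l) z, ibp l z]
      ring
    rw [show (∫ z : EuclideanSpace ℝ (Fin d), ∫ y : EuclideanSpace ℝ (Fin d),
        (∑ l : Fin d, u2 l) (z + y) * C z * u y)
        = ∫ z : EuclideanSpace ℝ (Fin d), (- ∑ l : Fin d,
            ∫ y : EuclideanSpace ℝ (Fin d), u1 l (z + y) * C z * u1 l y) from by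
      congr 1
      funext z
      exact inner z]
    rw [integral_neg, integral_finset_sum _ (fun l _ => margInt (u1 l) (u1 l))]
    congr 1
    exact Finset.sum_congr rfl fun l _ => (master (u1 l) (u1 l)).symm
end
end

section
/- Let H be a complex Hilbert space, G : H → H a bounded linear operator, and S := −(1/2)(G + G*). Assume ⟨x, S x⟩ ≥ 0 for all x ∈ H and let √S be the positive square root of S. Let λ > 0, λ' > 0, and let f, u, u' ∈ H satisfy λ u − G u = f and λ' u' − G u' = f. Then (λ + λ') · Re ⟨u, u'⟩ = ‖√S (u − u')‖² + λ ‖u‖² + λ' ‖u'‖². -/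
open ComplexOrder

noncomputable section

/-- the two-resolvent energy identity of the Kipnis–Varadhan theory:
if `S = -(G+G*)/2` is positive with positive square root `√S`, `λ, λ' > 0`,
`λu - Gu = f` and `λ'u' - Gu' = f`, then
`(λ+λ') Re⟨u,u'⟩ = ‖√S(u-u')‖² + λ‖u‖² + λ'‖u'‖²`. -/
theorem kipnis_varadhan_two_resolvent_identity {H : Type*}
    [NormedAddCommGroup H] [InnerProductSpace ℂ H] [CompleteSpace H]
    (G S sqrtS : H →L[ℂ] H)
    (hSdef : S = (-(2 : ℂ)⁻¹) • (G + ContinuousLinearMap.adjoint G))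
    (hSpos : ∀ x : H, 0 ≤ (inner ℂ x (S x) : ℂ))
    (hsqrtSpos : ∀ x : H, 0 ≤ (inner ℂ x (sqrtS x) : ℂ))
    (hsqrtS : sqrtS ∘L sqrtS = S)
    (lam lam' : ℝ) (hlam : 0 < lam) (hlam' : 0 < lam')
    (f u u' : H) (hu : lam • u - G u = f) (hu' : lam' • u' - G u' = f) :
    (lam + lam') * (inner ℂ u u' : ℂ).re
      = ‖sqrtS (u - u')‖ ^ 2 + lam * ‖u‖ ^ 2 + lam' * ‖u'‖ ^ 2 := by
  set w := u - u' with hw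
  have hsym : LinearMap.IsSymmetric (sqrtS : H →ₗ[ℂ] H) := by
    rw [LinearMap.isSymmetric_iff_inner_map_self_real]
    intro v
    have h := hsqrtSpos v
    rw [Complex.le_def] at h
    have him : (inner ℂ v (sqrtS v) : ℂ).im = 0 := h.2.symm
    have him' : (inner ℂ (sqrtS v) v : ℂ).im = 0 := by
      rw [← inner_conj_symm (sqrtS v) v, Complex.conj_im, him, neg_zero]
    rw [Complex.conj_eq_iff_im]
    exact him'
  have h1 : ‖sqrtS w‖ ^ 2 = (inner ℂ w (S w) : ℂ).re := by
    rw [← hsqrtS]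
    have e : (inner ℂ w ((sqrtS ∘L sqrtS) w) : ℂ) = inner ℂ (sqrtS w) (sqrtS w) := by
      rw [ContinuousLinearMap.comp_apply]
      exact (hsym w (sqrtS w)).symm
    rw [e]
    exact (inner_self_eq_norm_sq (𝕜 := ℂ) (sqrtS w)).symm
  have h2 : (inner ℂ w (S w) : ℂ).re = - (inner ℂ w (G w) : ℂ).re := by
    rw [hSdef]
    simp only [ContinuousLinearMap.smul_apply, ContinuousLinearMap.add_apply,
      inner_smul_right, inner_add_right, ContinuousLinearMap.adjoint_inner_right]
    have e : (inner ℂ (G w) w : ℂ) = starRingEnd ℂ (inner ℂ w (G w)) := (inner_conj_symm _ _).symm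
    rw [Complex.mul_re, e, Complex.add_re, Complex.add_im, Complex.conj_re, Complex.conj_im]
    simp
    ring
  have hGw : G w = lam • u - lam' • u' := by
    have h3 : G u = lam • u - f := by rw [← hu]; abel
    have h4 : G u' = lam' • u' - f := by rw [← hu']; abel
    rw [hw, map_sub, h3, h4]; abel
  have e1 : (inner ℂ u u : ℂ).re = ‖u‖ ^ 2 := inner_self_eq_norm_sq (𝕜 := ℂ) u
  have e2 : (inner ℂ u' u' : ℂ).re = ‖u'‖ ^ 2 := inner_self_eq_norm_sq (𝕜 := ℂ) u'
  have e3 : (inner ℂ u' u : ℂ).re = (inner ℂ u u' : ℂ).re := by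
    rw [← inner_conj_symm u' u, Complex.conj_re]
  have h5 : (inner ℂ w (G w) : ℂ).re
      = lam * ‖u‖ ^ 2 + lam' * ‖u'‖ ^ 2 - (lam + lam') * (inner ℂ u u' : ℂ).re := by
    rw [hGw, hw]
    rw [← Complex.coe_smul lam u, ← Complex.coe_smul lam' u']
    simp only [inner_sub_left, inner_sub_right, inner_smul_right, Complex.sub_re,
      Complex.mul_re, Complex.ofReal_re, Complex.ofReal_im]
    rw [e1, e2, e3]
    ring
  rw [h1, h2, h5]
  ring
end
end

section
/- Let H be a complex Hilbert space, G : H → H a bounded linear operator with S := −(1/2)(G + G*) satisfying ⟨x, Sx⟩ ≥ 0 for all x, and let √S be the positive square root of S. Fix f ∈ H and for each λ > 0 let u_λ := (λ I − G)^{−1} f. Then the following are equivalent: (i) (λ + λ') Re ⟨u_λ, u_{λ'}⟩ → 0 as λ, λ' → 0⁺ (jointly, i.e. for all sequences λ_n, λ'_n → 0⁺); (ii) √λ · ‖u_λ‖ → 0 as λ → 0⁺ and √S u_λ converges in H as λ → 0⁺. -/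
open Filter ComplexOrder
open scoped Topology

noncomputable section

/-- equivalence of the Kipnis–Varadhan conditions. With `G` bounded,
`S = -(G+G*)/2 ≥ 0` with positive square root `√S`, and resolvent vectors
`u_λ = (λI - G)^{-1} f`: the joint condition
`(λ+λ') Re⟨u_λ, u_{λ'}⟩ → 0` as `λ, λ' → 0⁺` holds iff
`√λ ‖u_λ‖ → 0` and `√S u_λ` converges in `H` as `λ → 0⁺`. -/
theorem kipnis_varadhan_conditions_equivalent {H : Type*}
    [NormedAddCommGroup H] [InnerProductSpace ℂ H] [CompleteSpace H]
    (G S sqrtS : H →L[ℂ] H)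
    (hSdef : S = (-(2 : ℂ)⁻¹) • (G + ContinuousLinearMap.adjoint G))
    (hSpos : ∀ x : H, 0 ≤ (inner ℂ x (S x) : ℂ))
    (hsqrtSpos : ∀ x : H, 0 ≤ (inner ℂ x (sqrtS x) : ℂ))
    (hsqrtS : sqrtS ∘L sqrtS = S)
    (f : H) (u : ℝ → H)
    (hu : ∀ lam : ℝ, 0 < lam → lam • u lam - G (u lam) = f) :
    Tendsto (fun z : ℝ × ℝ => (z.1 + z.2) * (inner ℂ (u z.1) (u z.2) : ℂ).re)
        ((nhdsWithin (0 : ℝ) (Set.Ioi 0)) ×ˢ (nhdsWithin (0 : ℝ) (Set.Ioi 0))) (nhds 0)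
      ↔ (Tendsto (fun lam : ℝ => Real.sqrt lam * ‖u lam‖)
            (nhdsWithin (0 : ℝ) (Set.Ioi 0)) (nhds 0) ∧
         ∃ v : H, Tendsto (fun lam : ℝ => sqrtS (u lam))
            (nhdsWithin (0 : ℝ) (Set.Ioi 0)) (nhds v)) := by
  set l := nhdsWithin (0 : ℝ) (Set.Ioi 0) with hldef
  set w : ℝ → H := fun a => sqrtS (u a) with hwdef
  -- sqrtS is symmetric
  have hsym : ∀ x y : H, (inner ℂ (sqrtS x) y : ℂ) = inner ℂ x (sqrtS y) := by
    have hsymm : LinearMap.IsSymmetric (sqrtS : H →ₗ[ℂ] H) := by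
      rw [LinearMap.isSymmetric_iff_inner_map_self_real]
      intro v
      have h := hsqrtSpos v
      rw [Complex.nonneg_iff] at h
      simp only [ContinuousLinearMap.coe_coe]
      rw [Complex.conj_eq_iff_im, ← inner_conj_symm (sqrtS v) v, Complex.conj_im, ← h.2, neg_zero]
    exact fun x y => hsymm x y
  -- resolvent identity
  have hres : ∀ a : ℝ, 0 < a → ∀ x : H,
      (inner ℂ x f : ℂ) = (a : ℂ) * inner ℂ x (u a) - inner ℂ x (G (u a)) := by
    intro a ha x
    rw [← hu a ha, inner_sub_right]
    congr 1
    rw [← algebraMap_smul ℂ a (u a), inner_smul_right, Complex.coe_algebraMap]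
  -- key complex identity
  have hc : ∀ a b : ℝ, 0 < a → 0 < b →
      ((a : ℂ) + (b : ℂ)) * inner ℂ (u a) (u b)
        = inner ℂ (u a) f + (starRingEnd ℂ) (inner ℂ (u b) f)
          - 2 * inner ℂ (w a) (w b) := by
    intro a b ha hb
    have h1 := hres b hb (u a)
    have h2 := hres a ha (u b)
    have hS2 : G + ContinuousLinearMap.adjoint G = (-2 : ℂ) • S := by
      rw [hSdef, smul_smul]; norm_num
    have hadj : (inner ℂ (u b) (G (u a)) : ℂ)
        = inner ℂ ((ContinuousLinearMap.adjoint G) (u b)) (u a) := by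
      rw [ContinuousLinearMap.adjoint_inner_left]
    have hw : (inner ℂ (w a) (w b) : ℂ) = inner ℂ (u a) (S (u b)) := by
      rw [hwdef]
      simp only
      rw [hsym, ← hsqrtS]
      rfl
    have hconj : (starRingEnd ℂ) (inner ℂ (u b) f : ℂ)
        = (a : ℂ) * inner ℂ (u a) (u b) - inner ℂ (u a) ((ContinuousLinearMap.adjoint G) (u b)) := by
      rw [h2, map_sub, map_mul, Complex.conj_ofReal, inner_conj_symm, hadj, inner_conj_symm]
    rw [h1, hconj]
    have hGG : (inner ℂ (u a) (G (u b)) : ℂ) + inner ℂ (u a) ((ContinuousLinearMap.adjoint G) (u b))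
        = (-2 : ℂ) * inner ℂ (u a) (S (u b)) := by
      rw [← inner_add_right, ← ContinuousLinearMap.add_apply, hS2,
        ContinuousLinearMap.smul_apply, inner_smul_right]
    rw [hw]
    linear_combination hGG
  -- real version with a = b : ⟨u a, f⟩.re = a‖u a‖² + ‖w a‖²
  have hre : ∀ a b : ℝ, 0 < a → 0 < b →
      (a + b) * (inner ℂ (u a) (u b) : ℂ).re
        = (inner ℂ (u a) f : ℂ).re + (inner ℂ (u b) f : ℂ).re
          - 2 * (inner ℂ (w a) (w b) : ℂ).re := by
    intro a b ha hb
    have h' := congrArg Complex.re (hc a b ha hb)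
    simp only [Complex.add_re, Complex.sub_re, Complex.mul_re, Complex.conj_re,
      Complex.ofReal_re, Complex.ofReal_im] at h'
    norm_num at h'
    linarith [h']
  have hnorm : ∀ x : H, (inner ℂ x x : ℂ).re = ‖x‖ ^ 2 := by
    intro x
    rw [← inner_self_eq_norm_sq (𝕜 := ℂ) x]
    rfl
  have hf : ∀ a : ℝ, 0 < a → (inner ℂ (u a) f : ℂ).re = a * ‖u a‖ ^ 2 + ‖w a‖ ^ 2 := by
    intro a ha
    have h := hre a a ha ha
    rw [hnorm, hnorm] at h
    linarith
  -- THE key identity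
  have hkey : ∀ a b : ℝ, 0 < a → 0 < b →
      (a + b) * (inner ℂ (u a) (u b) : ℂ).re
        = a * ‖u a‖ ^ 2 + b * ‖u b‖ ^ 2 + ‖w a - w b‖ ^ 2 := by
    intro a b ha hb
    have h := hre a b ha hb
    rw [hf a ha, hf b hb] at h
    have hns : ‖w a - w b‖ ^ 2 = ‖w a‖ ^ 2 - 2 * (inner ℂ (w a) (w b) : ℂ).re + ‖w b‖ ^ 2 := by
      have := @norm_sub_sq ℂ H _ _ _ (w a) (w b)
      simpa using this
    rw [hns]
    linarith
  have hposmem : ∀ᶠ z : ℝ × ℝ in l ×ˢ l, 0 < z.1 ∧ 0 < z.2 := by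
    apply Filter.prod_mem_prod <;> exact self_mem_nhdsWithin
  have hposmem1 : ∀ᶠ a : ℝ in l, 0 < a := self_mem_nhdsWithin
  constructor
  · intro hE
    -- diagonal: a‖u a‖² → 0
    have hdiag : Tendsto (fun a : ℝ => (a, a)) l (l ×ˢ l) :=
      Filter.Tendsto.prodMk tendsto_id tendsto_id
    have h2n : Tendsto (fun a : ℝ => 2 * (a * ‖u a‖ ^ 2)) l (𝓝 0) := by
      apply (hE.comp hdiag).congr'
      filter_upwards [hposmem1] with a ha
      have := hkey a a ha ha
      simp only [Function.comp]
      rw [this]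
      simp
      ring
    have hn : Tendsto (fun a : ℝ => a * ‖u a‖ ^ 2) l (𝓝 0) := by
      have := h2n.const_mul (1 / 2 : ℝ)
      simp only [mul_zero] at this
      apply this.congr
      intro a; ring
    constructor
    · -- √a ‖u a‖ → 0
      have hs : Tendsto (fun a : ℝ => Real.sqrt (a * ‖u a‖ ^ 2)) l (𝓝 0) := by
        have := (Real.continuous_sqrt.tendsto 0).comp hn
        simpa [Function.comp_def] using this
      apply hs.congr'
      filter_upwards [hposmem1] with a ha
      rw [Real.sqrt_mul ha.le, Real.sqrt_sq (norm_nonneg _)]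
    · -- w is Cauchy along l
      have hsq : Tendsto (fun z : ℝ × ℝ => ‖w z.1 - w z.2‖ ^ 2) (l ×ˢ l) (𝓝 0) := by
        apply squeeze_zero' (g := fun z : ℝ × ℝ => (z.1 + z.2) * (inner ℂ (u z.1) (u z.2) : ℂ).re)
        · filter_upwards with z; positivity
        · filter_upwards [hposmem] with z hz
          rw [hkey z.1 z.2 hz.1 hz.2]
          nlinarith [sq_nonneg ‖u z.1‖, sq_nonneg ‖u z.2‖, hz.1.le, hz.2.le,
            sq_nonneg (z.1 * ‖u z.1‖), mul_nonneg hz.1.le (sq_nonneg ‖u z.1‖),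
            mul_nonneg hz.2.le (sq_nonneg ‖u z.2‖)]
        · exact hE
      have hdist : Tendsto (fun z : ℝ × ℝ => dist (w z.1) (w z.2)) (l ×ˢ l) (𝓝 0) := by
        have := (Real.continuous_sqrt.tendsto 0).comp hsq
        simp only [Function.comp_def, Real.sqrt_zero] at this
        apply this.congr
        intro z
        rw [Real.sqrt_sq (norm_nonneg _), dist_eq_norm]
      have hcauchy : Cauchy (Filter.map w l) := by
        rw [cauchy_map_iff]
        refine ⟨inferInstance, ?_⟩
        exact tendsto_uniformity_iff_dist_tendsto_zero.mpr hdist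
      obtain ⟨v, hv⟩ := CompleteSpace.complete hcauchy
      exact ⟨v, hv⟩
  · rintro ⟨h1, v, hv⟩
    have hfst : Tendsto (fun z : ℝ × ℝ => z.1) (l ×ˢ l) l := tendsto_fst
    have hsnd : Tendsto (fun z : ℝ × ℝ => z.2) (l ×ˢ l) l := tendsto_snd
    have ht1 : Tendsto (fun z : ℝ × ℝ => (Real.sqrt z.1 * ‖u z.1‖) ^ 2) (l ×ˢ l) (𝓝 0) := by
      have := ((h1.comp hfst).pow 2)
      simpa [Function.comp_def] using this
    have ht2 : Tendsto (fun z : ℝ × ℝ => (Real.sqrt z.2 * ‖u z.2‖) ^ 2) (l ×ˢ l) (𝓝 0) := by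
      have := ((h1.comp hsnd).pow 2)
      simpa [Function.comp_def] using this
    have ht3 : Tendsto (fun z : ℝ × ℝ => ‖w z.1 - w z.2‖ ^ 2) (l ×ˢ l) (𝓝 0) := by
      have hsub : Tendsto (fun z : ℝ × ℝ => w z.1 - w z.2) (l ×ˢ l) (𝓝 (v - v)) :=
        (hv.comp hfst).sub (hv.comp hsnd)
      rw [sub_self] at hsub
      have := (hsub.norm.pow 2)
      simpa using this
    have hsum := (ht1.add ht2).add ht3
    rw [show (0 : ℝ) + 0 + 0 = 0 by ring] at hsum
    apply hsum.congr'
    filter_upwards [hposmem] with z hz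
    rw [hkey z.1 z.2 hz.1 hz.2]
    rw [mul_pow, mul_pow, Real.sq_sqrt hz.1.le, Real.sq_sqrt hz.2.le]
end
end

section
/- Let H be a complex Hilbert space, G : H → H a bounded linear operator with S := −(1/2)(G + G*) satisfying ⟨x, Sx⟩ ≥ 0 for all x, and √S its positive square root. Fix f ∈ H and for λ > 0 let u_λ := (λ I − G)^{−1} f. Assume √λ ‖u_λ‖ → 0 and √S u_λ → v in H as λ → 0⁺. Then the limit σ² := 2 lim_{λ → 0⁺} Re ⟨f, u_λ⟩ exists, is finite and nonnegative, and equals 2‖v‖². -/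
open Filter ComplexOrder
open scoped Topology

noncomputable section

/-- existence of the limiting variance in the Kipnis–Varadhan theory.
With `G` bounded, `S = -(G+G*)/2 ≥ 0` with positive square root `√S`, resolvent vectors
`u_λ = (λI - G)^{-1} f`, and assuming `√λ‖u_λ‖ → 0` and `√S u_λ → v` as `λ → 0⁺`, the
limit `σ² = 2 lim_{λ→0⁺} Re⟨f, u_λ⟩` exists, is finite and nonnegative, and equals
`2‖v‖²`. -/
theorem kipnis_varadhan_limiting_variance {H : Type*}
    [NormedAddCommGroup H] [InnerProductSpace ℂ H] [CompleteSpace H]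
    (G S sqrtS : H →L[ℂ] H)
    (hSdef : S = (-(2 : ℂ)⁻¹) • (G + ContinuousLinearMap.adjoint G))
    (hSpos : ∀ x : H, 0 ≤ (inner ℂ x (S x) : ℂ))
    (hsqrtSpos : ∀ x : H, 0 ≤ (inner ℂ x (sqrtS x) : ℂ))
    (hsqrtS : sqrtS ∘L sqrtS = S)
    (f : H) (u : ℝ → H)
    (hu : ∀ lam : ℝ, 0 < lam → lam • u lam - G (u lam) = f)
    (hA : Tendsto (fun lam : ℝ => Real.sqrt lam * ‖u lam‖)
      (nhdsWithin (0 : ℝ) (Set.Ioi 0)) (nhds 0))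
    (v : H)
    (hB : Tendsto (fun lam : ℝ => sqrtS (u lam)) (nhdsWithin (0 : ℝ) (Set.Ioi 0)) (nhds v)) :
    Tendsto (fun lam : ℝ => 2 * (inner ℂ f (u lam) : ℂ).re)
      (nhdsWithin (0 : ℝ) (Set.Ioi 0)) (nhds (2 * ‖v‖ ^ 2)) := by
  -- sqrtS is symmetric
  have hsym : (sqrtS : H →ₗ[ℂ] H).IsSymmetric := by
    rw [LinearMap.isSymmetric_iff_inner_map_self_real]
    intro w
    have h := hsqrtSpos w
    rw [Complex.nonneg_iff] at h
    have hreal : (starRingEnd ℂ) (inner ℂ w (sqrtS w) : ℂ) = (inner ℂ w (sqrtS w) : ℂ) := by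
      rw [Complex.conj_eq_iff_im]; exact h.2.symm
    calc (starRingEnd ℂ) (inner ℂ (sqrtS w) w : ℂ)
        = (inner ℂ w (sqrtS w) : ℂ) := by rw [inner_conj_symm]
      _ = (starRingEnd ℂ) (inner ℂ w (sqrtS w) : ℂ) := hreal.symm
      _ = (inner ℂ (sqrtS w) w : ℂ) := by rw [inner_conj_symm]
  -- key identity
  have key : ∀ lam : ℝ, 0 < lam →
      2 * (inner ℂ f (u lam) : ℂ).re
        = 2 * ((Real.sqrt lam * ‖u lam‖) ^ 2 + ‖sqrtS (u lam)‖ ^ 2) := by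
    intro lam hlam
    set w := u lam with hw
    have hf : f = lam • w - G w := (hu lam hlam).symm
    have hsmul : lam • w = (lam : ℂ) • w := (Complex.coe_smul lam w).symm
    have h1 : (inner ℂ f w : ℂ) = (lam : ℂ) * (inner ℂ w w : ℂ) - (inner ℂ (G w) w : ℂ) := by
      rw [hf, hsmul, inner_sub_left, inner_smul_left, Complex.conj_ofReal]
    have hS : (inner ℂ w (S w) : ℂ)
        = (-(2 : ℂ)⁻¹) * ((inner ℂ w (G w) : ℂ) + (inner ℂ (G w) w : ℂ)) := by
      rw [hSdef]
      simp only [ContinuousLinearMap.smul_apply, ContinuousLinearMap.add_apply,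
        inner_smul_right, inner_add_right, ContinuousLinearMap.adjoint_inner_right]
    have hSnorm : (inner ℂ w (S w) : ℂ) = ((‖sqrtS w‖ ^ 2 : ℝ) : ℂ) := by
      rw [← hsqrtS]
      have hs := hsym w (sqrtS w)
      simp only [ContinuousLinearMap.coe_coe] at hs
      rw [ContinuousLinearMap.comp_apply, ← hs, inner_self_eq_norm_sq_to_K]
      norm_cast
    have h2 : (inner ℂ w (S w) : ℂ).re = ‖sqrtS w‖ ^ 2 := by
      rw [hSnorm, Complex.ofReal_re]
    have h3 : (inner ℂ w (G w) : ℂ).re = (inner ℂ (G w) w : ℂ).re := by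
      rw [← inner_conj_symm w (G w), Complex.conj_re]
    have h4 : (inner ℂ w (S w) : ℂ).re = -(inner ℂ (G w) w : ℂ).re := by
      rw [hS]
      simp only [Complex.mul_re, Complex.add_re, Complex.add_im, Complex.neg_re,
        Complex.neg_im, Complex.inv_re, Complex.inv_im]
      simp [Complex.normSq, h3]
      ring
    have hre : (inner ℂ (G w) w : ℂ).re = -(‖sqrtS w‖ ^ 2) := by linarith
    have h5 : (inner ℂ f w : ℂ).re = lam * ‖w‖ ^ 2 + ‖sqrtS w‖ ^ 2 := by
      rw [h1, inner_self_eq_norm_sq_to_K, Complex.sub_re, hre]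
      simp [Complex.re_ofReal_mul, ← Complex.ofReal_pow]
    rw [h5, mul_pow, Real.sq_sqrt hlam.le]
  have h1 : Tendsto (fun lam : ℝ => (Real.sqrt lam * ‖u lam‖) ^ 2)
      (nhdsWithin (0 : ℝ) (Set.Ioi 0)) (nhds 0) := by
    simpa using hA.pow 2
  have h2 : Tendsto (fun lam : ℝ => ‖sqrtS (u lam)‖ ^ 2)
      (nhdsWithin (0 : ℝ) (Set.Ioi 0)) (nhds (‖v‖ ^ 2)) := (hB.norm).pow 2
  have haux : Tendsto (fun lam : ℝ => 2 * ((Real.sqrt lam * ‖u lam‖) ^ 2 + ‖sqrtS (u lam)‖ ^ 2))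
      (nhdsWithin (0 : ℝ) (Set.Ioi 0)) (nhds (2 * ‖v‖ ^ 2)) := by
    have := (h1.add h2).const_mul (2 : ℝ)
    simpa using this
  have heq : (fun lam : ℝ => 2 * ((Real.sqrt lam * ‖u lam‖) ^ 2 + ‖sqrtS (u lam)‖ ^ 2))
      =ᶠ[nhdsWithin (0 : ℝ) (Set.Ioi 0)] (fun lam : ℝ => 2 * (inner ℂ f (u lam) : ℂ).re) := by
    filter_upwards [self_mem_nhdsWithin] with lam hlam
    exact (key lam hlam).symm
  exact Tendsto.congr' heq haux
end
end
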